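/- For all n ≥ 1, all binary sequences x_{1:n} with a zeroes and b ones, and all θ ∈ [0,1]: log₂( θ^b (1-θ)^a / ξ_KT(x_{1:n}) ) ≤ (1/2)·log₂ n + 1. -/

import Mathlib

open MeasureTheory

/-- The Krichevsky–Trofimov estimator: the Beta(1/2,1/2) mixture of Bernoulli
likelihoods, where `b` and `a` count the ones and zeroes of `x`. -/
noncomputable def ktXi (x : List Bool) : ℝ :=
  ∫ θ in (0:ℝ)..1,
    θ ^ (x.count true) * (1 - θ) ^ (x.count false) *
      (Real.pi⁻¹ * θ ^ (-(1/2) : ℝ) * (1 - θ) ^ (-(1/2) : ℝ))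

noncomputable def pkt (a b : ℕ) : ℝ :=
  Real.Gamma (a+1/2) * Real.Gamma (b+1/2) / (Real.pi * (a+b).factorial)

theorem lem1 {x : ℝ} (hx : 1 ≤ x) : 2/(2*x+1) ≤ Real.log (1 + 1/x) := by
  have hx0 : (0:ℝ) < x := by linarith
  set t : ℝ := 2/(2*x+1) with ht
  have ht0 : 0 ≤ t := by positivity
  have ht1 : t ≤ 1 := by rw [ht, div_le_one (by linarith)]; linarith
  have hb := Real.exp_bound' ht0 ht1 (n := 4) (by norm_num)
  have hsum : (∑ i ∈ Finset.range 4, t ^ i / i.factorial) = 1 + t + t^2/2 + t^3/6 := by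
    simp [Finset.sum_range_succ, Nat.factorial]
  have hexp : Real.exp t ≤ 1 + t + t^2/2 + t^3/6 + t^4 * (5/96) := by
    calc Real.exp t ≤ _ := hb
    _ ≤ _ := by rw [hsum]; norm_num [Nat.factorial]; nlinarith [pow_nonneg ht0 4]
  have key : 1 + t + t^2/2 + t^3/6 + t^4 * (5/96) ≤ 1 + 1/x := by
    have h1 : (0:ℝ) < 2*x+1 := by linarith
    have heq : 1 + 1/x - (1 + t + t^2/2 + t^3/6 + t^4 * (5/96))
        = (128*x^2+176*x+96)/(96*x*(2*x+1)^4) := by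
      rw [ht]; field_simp; ring
    nlinarith [div_pos (by nlinarith : (0:ℝ) < 128*x^2+176*x+96)
      (by positivity : (0:ℝ) < 96*x*(2*x+1)^4), heq]
  have : Real.exp t ≤ 1 + 1/x := le_trans hexp key
  calc t = Real.log (Real.exp t) := (Real.log_exp t).symm
  _ ≤ Real.log (1 + 1/x) := Real.log_le_log (Real.exp_pos t) this

theorem lem2 {x : ℝ} (hx : 1 ≤ x) :
    Real.log (1 + 1/x) ≤ 4*(2*x+1)/(8*x^2+8*x+1) := by
  have hx0 : (0:ℝ) < x := by linarith
  set c : ℝ := 4*(2*x+1)/(8*x^2+8*x+1) with hc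
  have hc0 : 0 ≤ c := by positivity
  have hb := Real.sum_le_exp_of_nonneg hc0 5
  have hsum : (∑ i ∈ Finset.range 5, c ^ i / i.factorial)
      = 1 + c + c^2/2 + c^3/6 + c^4/24 := by
    simp [Finset.sum_range_succ, Nat.factorial]
  have key : 1 + 1/x ≤ 1 + c + c^2/2 + c^3/6 + c^4/24 := by
    have heq : (1 + c + c^2/2 + c^3/6 + c^4/24) - (1 + 1/x)
        = (-24 + 32*x + 1984*x^2 + 9728*x^3 + 17920*x^4 + 14336*x^5 + 4096*x^6)
          /(24*(8*x^2+8*x+1)^4*x) := by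
      rw [hc]; field_simp; ring
    have hpos : (0:ℝ) < -24 + 32*x + 1984*x^2 + 9728*x^3 + 17920*x^4 + 14336*x^5 + 4096*x^6 := by
      have h2 : (1:ℝ) ≤ x^2 := by nlinarith
      have h3 : (0:ℝ) ≤ x^3 := by positivity
      have h4 : (0:ℝ) ≤ x^4 := by positivity
      have h5 : (0:ℝ) ≤ x^5 := by positivity
      have h6 : (0:ℝ) ≤ x^6 := by positivity
      nlinarith
    nlinarith [div_pos hpos (by positivity : (0:ℝ) < 24*(8*x^2+8*x+1)^4*x), heq]
  have hle : 1 + 1/x ≤ Real.exp c := le_trans key (by rw [← hsum]; exact hb)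
  calc Real.log (1 + 1/x) ≤ Real.log (Real.exp c) :=
        Real.log_le_log (by positivity) hle
  _ = c := Real.log_exp c

theorem lem3 {x : ℝ} (hx : 1 ≤ x) :
    x * Real.log ((x+1)/x) + Real.log ((2*x+2)/(2*x+1)) ≤ 1 := by
  have hx0 : (0:ℝ) < x := by linarith
  have e1 : (x+1)/x = 1 + 1/x := by field_simp
  have e2 : (2*x+2)/(2*x+1) = 1 + 1/(2*x+1) := by field_simp; ring
  have hid : (1:ℝ) + 1/x = (1+1/(2*x+1))^2 * (1+1/(4*x*(x+1))) := by
    field_simp; ring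
  have hp2 : (0:ℝ) < 1 + 1/(2*x+1) := by positivity
  have hp3 : (0:ℝ) < 1 + 1/(4*x*(x+1)) := by positivity
  have hlog : Real.log (1+1/x)
      = 2 * Real.log (1+1/(2*x+1)) + Real.log (1+1/(4*x*(x+1))) := by
    rw [hid, Real.log_mul (by positivity) (ne_of_gt hp3), Real.log_pow]
    push_cast; ring
  have h2 := lem2 hx
  have h1 := lem1 (show (1:ℝ) ≤ 4*x*(x+1) by nlinarith)
  have hE : 2/(2*(4*x*(x+1))+1) = 2/(8*x^2+8*x+1) := by ring_nf
  rw [hE] at h1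
  -- x*L1 + L2 = (x+1/2)*L1 - (1/2)*L3
  have hgoal : x * Real.log (1+1/x) + Real.log (1+1/(2*x+1))
      = (x+1/2) * Real.log (1+1/x) - (1/2) * Real.log (1+1/(4*x*(x+1))) := by
    rw [hlog]; ring
  rw [e1, e2, hgoal]
  have hc : (x+1/2) * (4*(2*x+1)/(8*x^2+8*x+1)) - (1/2)*(2/(8*x^2+8*x+1)) = 1 := by
    field_simp; ring
  have hmul : (x+1/2) * Real.log (1+1/x) ≤ (x+1/2) * (4*(2*x+1)/(8*x^2+8*x+1)) :=
    mul_le_mul_of_nonneg_left h2 (by linarith)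
  nlinarith [h1]


theorem pkt_pos (a b : ℕ) : 0 < pkt a b := by
  unfold pkt
  have h1 : (0:ℝ) < Real.Gamma (a+1/2) := Real.Gamma_pos_of_pos (by positivity)
  have h2 : (0:ℝ) < Real.Gamma (b+1/2) := Real.Gamma_pos_of_pos (by positivity)
  have h3 : (0:ℝ) < (a+b).factorial := by exact_mod_cast (a+b).factorial_pos
  positivity

theorem pkt_comm (a b : ℕ) : pkt a b = pkt b a := by
  unfold pkt; rw [Nat.add_comm b a]; ring

theorem pkt_succ_left (a b : ℕ) :
    pkt (a+1) b = pkt a b * (((a:ℝ)+1/2)/((a:ℝ)+(b:ℝ)+1)) := by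
  unfold pkt
  have h1 : ((a+1:ℕ):ℝ)+1/2 = ((a:ℝ)+1/2) + 1 := by push_cast; ring
  rw [h1, Real.Gamma_add_one (by positivity)]
  have h2 : (a+1+b) = (a+b)+1 := by omega
  rw [h2, Nat.factorial_succ]
  have h3 : (0:ℝ) < (a+b).factorial := by exact_mod_cast (a+b).factorial_pos
  have hπ : (0:ℝ) < Real.pi := Real.pi_pos
  push_cast
  field_simp

theorem pkt_one_zero : pkt 1 0 = 1/2 := by
  unfold pkt
  have h1 : ((1:ℕ):ℝ)+1/2 = (1/2 : ℝ) + 1 := by norm_num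
  rw [h1, Real.Gamma_add_one (by norm_num)]
  have h0 : ((0:ℕ):ℝ)+1/2 = (1/2 : ℝ) := by norm_num
  rw [h0, Real.Gamma_one_half_eq]
  have : Real.sqrt Real.pi * Real.sqrt Real.pi = Real.pi :=
    Real.mul_self_sqrt Real.pi_pos.le
  simp [Nat.factorial]
  rw [div_eq_iff (ne_of_gt Real.pi_pos)]
  nlinarith [Real.pi_pos]

theorem kt_step {a n : ℕ} (ha : 1 ≤ a) (hn : 1 ≤ n) :
    ((a:ℝ)+1)^(a+1) * (Real.sqrt n * (n:ℝ)^n) ≤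
      ((a:ℝ)+1/2) * (a:ℝ)^a * (Real.sqrt (n+1) * ((n:ℝ)+1)^n) := by
  have hA : (1:ℝ) ≤ (a:ℝ) := by exact_mod_cast ha
  have hN : (1:ℝ) ≤ (n:ℝ) := by exact_mod_cast hn
  have hA0 : (0:ℝ) < a := by linarith
  have hN0 : (0:ℝ) < n := by linarith
  have hL : (0:ℝ) < ((a:ℝ)+1)^(a+1) * (Real.sqrt n * (n:ℝ)^n) := by positivity
  have hR : (0:ℝ) < ((a:ℝ)+1/2) * (a:ℝ)^a * (Real.sqrt (n+1) * ((n:ℝ)+1)^n) := by positivity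
  rw [← Real.log_le_log_iff hL hR]
  rw [Real.log_mul (by positivity) (by positivity), Real.log_mul (by positivity) (by positivity),
    Real.log_mul (by positivity) (by positivity), Real.log_mul (by positivity) (by positivity),
    Real.log_pow, Real.log_pow, Real.log_pow, Real.log_mul (by positivity) (by positivity),
    Real.log_pow,
    Real.log_sqrt hN0.le, Real.log_sqrt (by linarith : (0:ℝ) ≤ (n:ℝ)+1)]
  have h3 := lem3 hA
  have h1 := lem1 hN
  have e3a : Real.log (((a:ℝ)+1)/a) = Real.log ((a:ℝ)+1) - Real.log a :=
    Real.log_div (by linarith) (by linarith)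
  have e3b : Real.log ((2*(a:ℝ)+2)/(2*a+1)) = Real.log ((a:ℝ)+1) - Real.log ((a:ℝ)+1/2) := by
    rw [show (2*(a:ℝ)+2)/(2*a+1) = ((a:ℝ)+1)/((a:ℝ)+1/2) by
      rw [div_eq_div_iff (by linarith) (by linarith)]; ring]
    exact Real.log_div (by linarith) (by linarith)
  have e1a : Real.log (1 + 1/(n:ℝ)) = Real.log ((n:ℝ)+1) - Real.log n := by
    rw [show (1:ℝ) + 1/(n:ℝ) = ((n:ℝ)+1)/n by field_simp]
    exact Real.log_div (by linarith) (by linarith)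
  rw [e3a, e3b] at h3
  rw [e1a] at h1
  -- h1 : 2/(2n+1) ≤ log(n+1) - log n ; multiply by (n+1/2)
  have h1' : (1:ℝ) ≤ ((n:ℝ)+1/2) * (Real.log ((n:ℝ)+1) - Real.log n) := by
    have := mul_le_mul_of_nonneg_left h1 (by linarith : (0:ℝ) ≤ (n:ℝ)+1/2)
    calc (1:ℝ) = ((n:ℝ)+1/2) * (2/(2*n+1)) := by field_simp
    _ ≤ _ := this
  push_cast
  nlinarith [h3, h1']

theorem kt_step0 {n : ℕ} (hn : 1 ≤ n) :
    2 * (Real.sqrt n * (n:ℝ)^n) ≤ Real.sqrt (n+1) * ((n:ℝ)+1)^n := by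
  have hN : (1:ℝ) ≤ (n:ℝ) := by exact_mod_cast hn
  have hN0 : (0:ℝ) < n := by linarith
  have h2 : (2:ℝ) * (n:ℝ)^n ≤ ((n:ℝ)+1)^n := by
    have hb := one_add_mul_le_pow (show (-2:ℝ) ≤ 1/n by
      have : (0:ℝ) ≤ 1/n := by positivity
      linarith) n
    have hbb : (2:ℝ) ≤ ((1:ℝ) + 1/n)^n := by
      have : (n:ℝ)*(1/n) = 1 := by field_simp
      linarith [hb, this.symm ▸ hb]
    have hmm : ((1:ℝ) + 1/n)^n * (n:ℝ)^n = ((n:ℝ)+1)^n := by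
      rw [← mul_pow]; congr 1; field_simp
    calc (2:ℝ) * (n:ℝ)^n ≤ ((1:ℝ) + 1/n)^n * (n:ℝ)^n :=
          mul_le_mul_of_nonneg_right hbb (by positivity)
    _ = _ := hmm
  have hs : Real.sqrt n ≤ Real.sqrt (n+1) := Real.sqrt_le_sqrt (by linarith)
  have hs0 : 0 ≤ Real.sqrt n := Real.sqrt_nonneg _
  nlinarith [pow_pos hN0 n, Real.sqrt_pos.mpr hN0]

theorem kt_succ {a b m : ℕ} (hm : 1 ≤ m) (hab : a + b = m)
    (ih : (a:ℝ)^a * (b:ℝ)^b ≤ 2 * Real.sqrt m * (m:ℝ)^m * pkt a b) :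
    ((a:ℝ)+1)^(a+1) * (b:ℝ)^b ≤
      2 * Real.sqrt ((m:ℝ)+1) * ((m:ℝ)+1)^(m+1) * pkt (a+1) b := by
  have hM : (1:ℝ) ≤ (m:ℝ) := by exact_mod_cast hm
  have hM0 : (0:ℝ) < m := by linarith
  have hpkt : pkt (a+1) b = pkt a b * (((a:ℝ)+1/2)/((m:ℝ)+1)) := by
    rw [pkt_succ_left]
    congr 2
    push_cast [← hab]; ring
  have hRHS : 2 * Real.sqrt ((m:ℝ)+1) * ((m:ℝ)+1)^(m+1) * pkt (a+1) b
      = 2 * ((a:ℝ)+1/2) * Real.sqrt ((m:ℝ)+1) * ((m:ℝ)+1)^m * pkt a b := by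
    rw [hpkt, pow_succ]
    field_simp
  rw [hRHS]
  have hR0 : 0 < pkt a b := pkt_pos a b
  rcases Nat.eq_zero_or_pos a with ha0 | ha1
  · subst ha0
    have h0 := kt_step0 hm
    calc (((0:ℕ):ℝ)+1)^(0+1) * (b:ℝ)^b = ((0:ℕ):ℝ)^(0:ℕ) * (b:ℝ)^b := by norm_num
    _ ≤ 2 * Real.sqrt m * (m:ℝ)^m * pkt 0 b := ih
    _ = (2 * (Real.sqrt m * (m:ℝ)^m)) * pkt 0 b := by ring
    _ ≤ (Real.sqrt ((m:ℝ)+1) * ((m:ℝ)+1)^m) * pkt 0 b :=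
        mul_le_mul_of_nonneg_right h0 hR0.le
    _ = 2 * (((0:ℕ):ℝ)+1/2) * Real.sqrt ((m:ℝ)+1) * ((m:ℝ)+1)^m * pkt 0 b := by ring
  · have hS : (0:ℝ) < Real.sqrt m * (m:ℝ)^m := by positivity
    refine le_of_mul_le_mul_right ?_ hS
    calc ((a:ℝ)+1)^(a+1) * (b:ℝ)^b * (Real.sqrt m * (m:ℝ)^m)
        = (((a:ℝ)+1)^(a+1) * (Real.sqrt m * (m:ℝ)^m)) * (b:ℝ)^b := by ring
    _ ≤ (((a:ℝ)+1/2) * (a:ℝ)^a * (Real.sqrt ((m:ℝ)+1) * ((m:ℝ)+1)^m)) * (b:ℝ)^b := by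
        exact mul_le_mul_of_nonneg_right (kt_step ha1 hm) (by positivity)
    _ = (((a:ℝ)+1/2) * (Real.sqrt ((m:ℝ)+1) * ((m:ℝ)+1)^m)) * ((a:ℝ)^a * (b:ℝ)^b) := by ring
    _ ≤ (((a:ℝ)+1/2) * (Real.sqrt ((m:ℝ)+1) * ((m:ℝ)+1)^m))
          * (2 * Real.sqrt m * (m:ℝ)^m * pkt a b) := by
        refine mul_le_mul_of_nonneg_left ih (by positivity)
    _ = 2 * ((a:ℝ)+1/2) * Real.sqrt ((m:ℝ)+1) * ((m:ℝ)+1)^m * pkt a b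
          * (Real.sqrt m * (m:ℝ)^m) := by ring

theorem kt_lower : ∀ n : ℕ, 1 ≤ n → ∀ a b : ℕ, a + b = n →
    (a:ℝ)^a * (b:ℝ)^b ≤ 2 * Real.sqrt n * (n:ℝ)^n * pkt a b := by
  intro n
  induction n with
  | zero => omega
  | succ m ih =>
    intro _ a b hab
    rcases Nat.eq_zero_or_pos m with hm0 | hm1
    · subst hm0
      have hcase : (a = 1 ∧ b = 0) ∨ (a = 0 ∧ b = 1) := by omega
      rcases hcase with ⟨rfl, rfl⟩ | ⟨rfl, rfl⟩
      · rw [pkt_one_zero]; norm_num [Real.sqrt_one]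
      · rw [pkt_comm, pkt_one_zero]; norm_num [Real.sqrt_one]
    · rcases Nat.eq_zero_or_pos a with ha0 | ha1
      · subst ha0
        have hb : b = m + 1 := by omega
        subst hb
        have h := kt_succ hm1 (Nat.add_zero m) (ih hm1 m 0 (Nat.add_zero m))
        rw [pkt_comm]
        rw [show ((0:ℕ):ℝ)^(0:ℕ) = 1 by norm_num] at h ⊢
        push_cast
        push_cast at h
        linarith [h]
      · obtain ⟨a', rfl⟩ : ∃ a', a = a' + 1 := ⟨a-1, by omega⟩
        have ihh := ih hm1 a' b (by omega)
        have h := kt_succ hm1 (by omega) ihh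
        push_cast
        convert h using 2 <;> push_cast <;> ring


theorem real_beta {u v : ℝ} (hu : 0 < u) (hv : 0 < v) :
    ∫ x in (0:ℝ)..1, x^(u-1) * (1-x)^(v-1)
      = Real.Gamma u * Real.Gamma v / Real.Gamma (u+v) := by
  have h := Complex.Gamma_mul_Gamma_eq_betaIntegral
    (by simpa using hu : 0 < (u:ℂ).re) (by simpa using hv : 0 < (v:ℂ).re)
  have hbeta : Complex.betaIntegral (u:ℂ) (v:ℂ)
      = ((∫ x in (0:ℝ)..1, x^(u-1) * (1-x)^(v-1) : ℝ) : ℂ) := by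
    rw [Complex.betaIntegral, ← intervalIntegral.integral_ofReal]
    apply intervalIntegral.integral_congr
    intro x hx
    rw [Set.uIcc_of_le (by norm_num : (0:ℝ) ≤ 1)] at hx
    obtain ⟨hx0, hx1⟩ := hx
    have e1 : ((x:ℂ))^((u:ℂ)-1) = (((x^(u-1) : ℝ)):ℂ) := by
      rw [show ((u:ℂ)-1) = (((u-1 : ℝ)):ℂ) by push_cast; ring]
      exact (Complex.ofReal_cpow hx0 (u-1)).symm
    have e2 : ((1:ℂ) - (x:ℂ))^((v:ℂ)-1) = (((1-x)^(v-1) : ℝ) : ℂ) := by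
      rw [show ((1:ℂ) - (x:ℂ)) = (((1 - x : ℝ)):ℂ) by push_cast; ring,
        show ((v:ℂ)-1) = (((v-1 : ℝ)):ℂ) by push_cast; ring]
      exact (Complex.ofReal_cpow (by linarith) (v-1)).symm
    simp only [e1, e2, Complex.ofReal_mul]
  rw [hbeta] at h
  have hG : Complex.Gamma ((u:ℂ)+(v:ℂ)) = ((Real.Gamma (u+v) : ℝ) : ℂ) := by
    rw [show ((u:ℂ)+(v:ℂ)) = (((u+v:ℝ)):ℂ) by push_cast; ring, Complex.Gamma_ofReal]
  rw [Complex.Gamma_ofReal, Complex.Gamma_ofReal, hG, ← Complex.ofReal_mul,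
    ← Complex.ofReal_mul] at h
  have hreal : Real.Gamma u * Real.Gamma v
      = Real.Gamma (u+v) * ∫ x in (0:ℝ)..1, x^(u-1) * (1-x)^(v-1) := by
    exact_mod_cast h
  have hne : Real.Gamma (u+v) ≠ 0 := (Real.Gamma_pos_of_pos (by linarith)).ne'
  field_simp [hne]
  linarith [hreal]

theorem rpow_half_eq {t : ℝ} (ht0 : 0 ≤ t) (k : ℕ) :
    t ^ k * t ^ (-(1/2) : ℝ) = t ^ ((k:ℝ) + 1/2 - 1) := by
  rcases eq_or_lt_of_le ht0 with h0 | hpos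
  · rw [← h0]
    rw [Real.zero_rpow (by norm_num : (-(1/2):ℝ) ≠ 0), mul_zero,
      Real.zero_rpow (show ((k:ℝ)+1/2-1) ≠ 0 by
        rcases Nat.eq_zero_or_pos k with rfl | hk
        · norm_num
        · have : (1:ℝ) ≤ k := by exact_mod_cast hk
          intro hh; linarith)]
  · rw [← Real.rpow_natCast t k, ← Real.rpow_add hpos]
    congr 1; ring

theorem ktXi_eq (x : List Bool) :
    ktXi x = pkt (x.count false) (x.count true) := by
  set b := x.count true
  set a := x.count false
  have hint : ktXi x = Real.pi⁻¹ * ∫ θ in (0:ℝ)..1, θ^((b:ℝ)+1/2-1) * (1-θ)^((a:ℝ)+1/2-1) := by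
    rw [ktXi, ← intervalIntegral.integral_const_mul]
    apply intervalIntegral.integral_congr
    intro θ hθ
    rw [Set.uIcc_of_le (by norm_num : (0:ℝ) ≤ 1)] at hθ
    obtain ⟨h0, h1⟩ := hθ
    simp only
    have e1 : θ ^ b * θ ^ (-(1/2) : ℝ) = θ ^ ((b:ℝ) + 1/2 - 1) := rpow_half_eq h0 b
    have e2 : (1-θ) ^ a * (1-θ) ^ (-(1/2) : ℝ) = (1-θ) ^ ((a:ℝ) + 1/2 - 1) :=
      rpow_half_eq (by linarith) a
    rw [← e1, ← e2]
    ring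
  rw [hint, real_beta (by positivity) (by positivity)]
  rw [show ((b:ℝ)+1/2) + ((a:ℝ)+1/2) = ((a+b : ℕ):ℝ) + 1 by push_cast; ring]
  rw [Real.Gamma_nat_eq_factorial]
  rw [pkt]
  have hπ : Real.pi ≠ 0 := Real.pi_ne_zero
  have hf : (((a+b).factorial : ℕ):ℝ) ≠ 0 := by exact_mod_cast (a+b).factorial_ne_zero
  field_simp


theorem kt_amgm {θ : ℝ} (h0 : 0 ≤ θ) (h1 : θ ≤ 1) (a b : ℕ) :
    θ^b * (1-θ)^a * ((a:ℝ)+(b:ℝ))^(a+b) ≤ (a:ℝ)^a * (b:ℝ)^b := by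
  rcases Nat.eq_zero_or_pos b with hb0 | hb1
  · subst hb0
    simp only [pow_zero, mul_one, Nat.cast_zero, add_zero, one_mul, Nat.add_zero]
    calc (1-θ)^a * (a:ℝ)^a ≤ 1 * (a:ℝ)^a := by
          refine mul_le_mul_of_nonneg_right ?_ (by positivity)
          exact pow_le_one₀ (by linarith) (by linarith)
    _ = (a:ℝ)^a := by ring
  rcases Nat.eq_zero_or_pos a with ha0 | ha1
  · subst ha0
    simp only [pow_zero, Nat.cast_zero, zero_add, one_mul, Nat.zero_add]
    calc θ^b * 1 * (b:ℝ)^b ≤ 1 * (b:ℝ)^b := by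
          refine mul_le_mul_of_nonneg_right ?_ (by positivity)
          rw [mul_one]
          exact pow_le_one₀ (by linarith) (by linarith)
    _ = (b:ℝ)^b := by ring
  -- a, b ≥ 1
  have hA : (0:ℝ) < a := by exact_mod_cast ha1
  have hB : (0:ℝ) < b := by exact_mod_cast hb1
  have hN : (0:ℝ) < (a:ℝ)+(b:ℝ) := by linarith
  set N : ℝ := (a:ℝ)+(b:ℝ) with hNdef
  set p1 : ℝ := N*(1-θ)/a with hp1def
  set p2 : ℝ := N*θ/b with hp2def
  have hp1 : 0 ≤ p1 := div_nonneg (mul_nonneg hN.le (by linarith)) hA.le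
  have hp2 : 0 ≤ p2 := div_nonneg (mul_nonneg hN.le h0) hB.le
  have hw : (a:ℝ)/N + (b:ℝ)/N = 1 := by field_simp; exact hNdef.symm
  have h := Real.geom_mean_le_arith_mean2_weighted
    (by positivity : (0:ℝ) ≤ (a:ℝ)/N) (by positivity : (0:ℝ) ≤ (b:ℝ)/N) hp1 hp2 hw
  have harith : (a:ℝ)/N * p1 + (b:ℝ)/N * p2 = 1 := by
    rw [hp1def, hp2def]; field_simp; ring
  rw [harith] at h
  have h2 : (p1^((a:ℝ)/N) * p2^((b:ℝ)/N))^(a+b) ≤ 1 :=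
    pow_le_one₀ (by positivity) h
  have h3 : (p1^((a:ℝ)/N) * p2^((b:ℝ)/N))^(a+b) = p1^a * p2^b := by
    rw [mul_pow, ← Real.rpow_natCast (p1^((a:ℝ)/N)) (a+b),
      ← Real.rpow_natCast (p2^((b:ℝ)/N)) (a+b),
      ← Real.rpow_mul hp1, ← Real.rpow_mul hp2]
    rw [show (a:ℝ)/N * ((a+b:ℕ):ℝ) = (a:ℝ) by push_cast [hNdef]; field_simp,
      show (b:ℝ)/N * ((a+b:ℕ):ℝ) = (b:ℝ) by push_cast [hNdef]; field_simp]
    rw [Real.rpow_natCast, Real.rpow_natCast]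
  rw [h3] at h2
  have eθ : θ = (b:ℝ)/N * p2 := by rw [hp2def]; field_simp
  have e1θ : 1 - θ = (a:ℝ)/N * p1 := by rw [hp1def]; field_simp
  calc θ^b * (1-θ)^a * N^(a+b)
      = ((b:ℝ)/N * p2)^b * ((a:ℝ)/N * p1)^a * N^(a+b) := by rw [← eθ, ← e1θ]
  _ = ((a:ℝ)^a * (b:ℝ)^b) * (p1^a * p2^b) := by
      clear_value p1 p2 N
      rw [mul_pow, mul_pow, div_pow, div_pow, pow_add]
      field_simp
  _ ≤ ((a:ℝ)^a * (b:ℝ)^b) * 1 := mul_le_mul_of_nonneg_left h2 (by positivity)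
  _ = (a:ℝ)^a * (b:ℝ)^b := by ring

theorem count_tf (x : List Bool) : x.count false + x.count true = x.length := by
  induction x with
  | nil => simp
  | cons h t ih =>
    cases h <;> simp [List.count_cons] <;> omega

/-- KT parameter redundancy: for all `n ≥ 1`, binary sequences `x` of length `n`
with `a` zeroes and `b` ones, and all `θ ∈ [0,1]`,
`log₂(θ^b (1-θ)^a / ξ_KT(x)) ≤ (1/2)·log₂ n + 1`. -/
theorem kt_redundancy_bound (x : List Bool) (hx : 1 ≤ x.length)
    (θ : ℝ) (hθ : θ ∈ Set.Icc (0:ℝ) 1) :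
    Real.logb 2 (θ ^ (x.count true) * (1 - θ) ^ (x.count false) / ktXi x) ≤
      (1/2) * Real.logb 2 (x.length : ℝ) + 1 := by
  obtain ⟨h0, h1⟩ := hθ
  set b := x.count true with hbdef
  set a := x.count false with hadef
  have hab : a + b = x.length := count_tf x
  have hn : 1 ≤ a + b := by omega
  have hXi : ktXi x = pkt a b := ktXi_eq x
  have hpkt : 0 < pkt a b := pkt_pos a b
  have hN : (1:ℝ) ≤ ((a+b:ℕ):ℝ) := by exact_mod_cast hn
  have hN0 : (0:ℝ) < ((a+b:ℕ):ℝ) := by linarith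
  have hKT := kt_lower (a+b) hn a b rfl
  have hAM := kt_amgm h0 h1 a b
  have hcast : (a:ℝ)+(b:ℝ) = ((a+b:ℕ):ℝ) := by push_cast; ring
  rw [hcast] at hAM
  have key : θ^b * (1-θ)^a ≤ 2 * Real.sqrt ((a+b:ℕ):ℝ) * pkt a b := by
    have hP : (0:ℝ) < ((a+b:ℕ):ℝ)^(a+b) := pow_pos hN0 _
    refine le_of_mul_le_mul_right ?_ hP
    calc θ^b * (1-θ)^a * ((a+b:ℕ):ℝ)^(a+b) ≤ (a:ℝ)^a * (b:ℝ)^b := hAM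
    _ ≤ 2 * Real.sqrt ((a+b:ℕ):ℝ) * ((a+b:ℕ):ℝ)^(a+b) * pkt a b := hKT
    _ = 2 * Real.sqrt ((a+b:ℕ):ℝ) * pkt a b * ((a+b:ℕ):ℝ)^(a+b) := by ring
  have hnum : 0 ≤ θ^b * (1-θ)^a := mul_nonneg (pow_nonneg h0 b) (pow_nonneg (by linarith) a)
  have hlen : ((x.length:ℕ):ℝ) = ((a+b:ℕ):ℝ) := by rw [hab]
  rcases eq_or_lt_of_le hnum with hz | hpos
  · rw [← hz, zero_div, Real.logb_zero]
    have : 0 ≤ Real.logb 2 ((x.length:ℕ):ℝ) :=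
      Real.logb_nonneg one_lt_two (by exact_mod_cast hx)
    linarith
  · have hR : 0 < θ^b * (1-θ)^a / ktXi x := by
      rw [hXi]; exact div_pos hpos hpkt
    have hRle : θ^b * (1-θ)^a / ktXi x ≤ 2 * Real.sqrt ((a+b:ℕ):ℝ) := by
      rw [hXi, div_le_iff₀ hpkt]
      calc θ^b * (1-θ)^a ≤ 2 * Real.sqrt ((a+b:ℕ):ℝ) * pkt a b := key
      _ = 2 * Real.sqrt ((a+b:ℕ):ℝ) * pkt a b := rfl
    calc Real.logb 2 (θ^b * (1-θ)^a / ktXi x)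
        ≤ Real.logb 2 (2 * Real.sqrt ((a+b:ℕ):ℝ)) :=
          (Real.logb_le_logb one_lt_two hR
            (mul_pos two_pos (Real.sqrt_pos.mpr hN0))).mpr hRle
    _ = 1 + (1/2) * Real.logb 2 ((a+b:ℕ):ℝ) := by
        rw [Real.logb_mul two_ne_zero (by positivity),
          Real.logb_self_eq_one (by norm_num)]
        unfold Real.logb
        rw [Real.log_sqrt hN0.le]
        ring
    _ = (1/2) * Real.logb 2 ((x.length:ℕ):ℝ) + 1 := by rw [hlen]; ring
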